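/- arXiv:2012.02999 — 2 statements merged into one kernel-verified Lean document; each statement's English description precedes it below -/
import Mathlib

section
/- Let {c_k}_{k≥0} be real coefficients such that the matrix power series f_0(Z) = Σ_{k=0}^∞ c_k Z^k and f_2(Z) = Σ_{k=0}^∞ c_{k+2} Z^k converge. Then Σ_{k=0}^∞ c_k q_k(A) equals the (3,3) n×n block of the matrix f_0(Z) − μ²·f_2(Z), where μ = 1 − θ. -/
open Matrix Finset

open scoped Classical in
/-- Backtrack-downweighted walk count matrix: entry `(i,j)` is the sum over all walks
of length `k` from `i` to `j` of `θ ^ (number of backtracking steps)`. -/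
noncomputable def btdwCount {n : ℕ} (A : Matrix (Fin n) (Fin n) ℝ) (θ : ℝ) (k : ℕ) :
    Matrix (Fin n) (Fin n) ℝ :=
  Matrix.of fun i j =>
    ∑ w : Fin (k + 1) → Fin n,
      (let w' : ℕ → Fin n := fun s => w ⟨s % (k + 1), Nat.mod_lt s (Nat.succ_pos k)⟩
       if w' 0 = i ∧ w' k = j ∧ (∀ s ∈ Finset.range k, A (w' s) (w' (s + 1)) = 1)
       then θ ^ ((Finset.range (k - 1)).filter fun s => w' s = w' (s + 2)).card
       else 0)

/-- Diagonal matrix `D` with `d_{ii} = (A²)_{ii}`. -/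
noncomputable def degDiag {n : ℕ} (A : Matrix (Fin n) (Fin n) ℝ) : Matrix (Fin n) (Fin n) ℝ :=
  Matrix.diagonal fun i => (A * A) i i

/-- Matrix `S` with `s_{ij} = a_{ij} a_{ji}`. -/
noncomputable def recipMat {n : ℕ} (A : Matrix (Fin n) (Fin n) ℝ) : Matrix (Fin n) (Fin n) ℝ :=
  Matrix.of fun i j => A i j * A j i

/-- The block matrix `Z = [[0, I, 0], [0, 0, I], [−μ²(A−S), μ(μI−D), A]]` with `μ = 1 − θ`. -/
noncomputable def Zmat {n : ℕ} (A : Matrix (Fin n) (Fin n) ℝ) (θ : ℝ) :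
    Matrix ((Fin n ⊕ Fin n) ⊕ Fin n) ((Fin n ⊕ Fin n) ⊕ Fin n) ℝ :=
  Matrix.fromBlocks
    (Matrix.fromBlocks 0 1 0 0)
    (Matrix.fromRows 0 1)
    (Matrix.fromCols (-((1 - θ) ^ 2) • (A - recipMat A)) ((1 - θ) • ((1 - θ) • 1 - degDiag A)))
    A

/-- Stack three `n × n` matrices vertically into a `3n × n` matrix. -/
noncomputable def stack3 {n : ℕ} (X Y W : Matrix (Fin n) (Fin n) ℝ) :
    Matrix ((Fin n ⊕ Fin n) ⊕ Fin n) (Fin n) ℝ :=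
  Matrix.fromRows (Matrix.fromRows X Y) W

namespace BTDWProof

variable {n : ℕ}

/-! ### the walk-sum recursion -/

def ve {k : ℕ} (w : Fin (k + 1) → Fin n) : ℕ → Fin n :=
  fun s => w ⟨s % (k + 1), Nat.mod_lt s (Nat.succ_pos k)⟩

lemma ve_cons_zero {k : ℕ} (x : Fin n) (u : Fin (k + 1) → Fin n) :
    ve (k := k + 1) (Fin.cons x u) 0 = x := by
  show (Fin.cons x u : Fin (k+2) → Fin n) ⟨0 % (k + 2), _⟩ = x
  have h : (⟨0 % (k + 2), Nat.mod_lt 0 (Nat.succ_pos (k+1))⟩ : Fin (k + 2)) = 0 := by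
    ext; simp
  rw [h, Fin.cons_zero]

lemma ve_cons_succ {k : ℕ} (x : Fin n) (u : Fin (k + 1) → Fin n) {s : ℕ} (hs : s ≤ k) :
    ve (k := k + 1) (Fin.cons x u) (s + 1) = ve u s := by
  show (Fin.cons x u : Fin (k+2) → Fin n) ⟨(s+1) % (k + 2), _⟩ = u ⟨s % (k+1), _⟩
  have h1 : (⟨(s+1) % (k + 2), Nat.mod_lt (s+1) (Nat.succ_pos (k+1))⟩ : Fin (k + 2))
      = Fin.succ ⟨s % (k+1), Nat.mod_lt s (Nat.succ_pos k)⟩ := by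
    ext
    simp [Fin.val_succ, Nat.mod_eq_of_lt (by omega : s + 1 < k + 2),
      Nat.mod_eq_of_lt (by omega : s < k + 1)]
  rw [h1, Fin.cons_succ]

noncomputable def wa (A : Matrix (Fin n) (Fin n) ℝ) (θ : ℝ) :
    ℕ → (Fin n → ℝ) → Fin n → Fin n → ℝ
  | 0, _, a, j => if a = j then 1 else 0
  | (k+1), c, a, j =>
      ∑ m, A a m * c m * wa A θ k (fun l => if l = a then θ else 1) m j

lemma wa_zero (A : Matrix (Fin n) (Fin n) ℝ) (θ : ℝ) (c : Fin n → ℝ) (a j : Fin n) :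
    wa A θ 0 c a j = if a = j then 1 else 0 := rfl

lemma wa_succ (A : Matrix (Fin n) (Fin n) ℝ) (θ : ℝ) (k : ℕ) (c : Fin n → ℝ) (a j : Fin n) :
    wa A θ (k+1) c a j
      = ∑ m, A a m * c m * wa A θ k (fun l => if l = a then θ else 1) m j := rfl

lemma bridge (A : Matrix (Fin n) (Fin n) ℝ) (θ : ℝ) :
    ∀ (K : ℕ) (c : Fin n → ℝ) (a j : Fin n),
    (∑ u : Fin (K+1) → Fin n,
      if ve u 0 = a ∧ ve u K = j then
        (∏ s ∈ range K, A (ve u s) (ve u (s+1))) *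
        ((if K = 0 then 1 else c (ve u 1)) *
         ∏ s ∈ range (K-1), if ve u s = ve u (s+2) then θ else 1)
      else 0) = wa A θ K c a j := by
  intro K
  induction K with
  | zero =>
    intro c a j
    rw [wa_zero, ← (Equiv.funUnique (Fin 1) (Fin n)).symm.sum_comp]
    have hve : ∀ x : Fin n, ve (k := 0) ((Equiv.funUnique (Fin 1) (Fin n)).symm x) 0 = x := by
      intro x; rfl
    simp only [hve, range_zero, prod_empty, if_pos rfl, Nat.zero_sub, one_mul, mul_one]
    by_cases h : a = j
    · subst h; simp
    · rw [if_neg h]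
      refine Finset.sum_eq_zero fun x _ => ?_
      rw [if_neg]; rintro ⟨h1, h2⟩; exact h (h1 ▸ h2 ▸ rfl)
  | succ K ih =>
    intro c a j
    rw [wa_succ, ← (Fin.consEquiv (fun _ : Fin (K+2) => Fin n)).sum_comp,
      Fintype.sum_prod_type]
    have key : ∀ (x : Fin n) (t : Fin (K+1) → Fin n),
        (if ve (k := K+1) (Fin.consEquiv (fun _ : Fin (K+2) => Fin n) (x, t)) 0 = a ∧
            ve (k := K+1) (Fin.consEquiv (fun _ : Fin (K+2) => Fin n) (x, t)) (K+1) = j then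
          (∏ s ∈ range (K+1),
            A (ve (k := K+1) (Fin.consEquiv (fun _ : Fin (K+2) => Fin n) (x, t)) s)
              (ve (k := K+1) (Fin.consEquiv (fun _ : Fin (K+2) => Fin n) (x, t)) (s+1))) *
          ((if K + 1 = 0 then 1
            else c (ve (k := K+1) (Fin.consEquiv (fun _ : Fin (K+2) => Fin n) (x, t)) 1)) *
           ∏ s ∈ range (K+1-1),
            if ve (k := K+1) (Fin.consEquiv (fun _ : Fin (K+2) => Fin n) (x, t)) s =
               ve (k := K+1) (Fin.consEquiv (fun _ : Fin (K+2) => Fin n) (x, t)) (s+2) then θ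
            else 1)
        else 0)
        = (if x = a then (1:ℝ) else 0) *
          ∑ m, (if ve t 0 = m then (1:ℝ) else 0) *
            (A a m * c m *
              (if ve t 0 = m ∧ ve t K = j then
                (∏ s ∈ range K, A (ve t s) (ve t (s+1))) *
                ((if K = 0 then 1 else (if ve t 1 = a then θ else 1)) *
                 ∏ s ∈ range (K-1), if ve t s = ve t (s+2) then θ else 1)
               else 0)) := by
      intro x t
      have hw : (Fin.consEquiv (fun _ : Fin (K+2) => Fin n)) (x, t) = Fin.cons x t := rfl
      rw [hw]
      have hv0 : ve (k := K+1) (Fin.cons x t) 0 = x := ve_cons_zero x t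
      have hvs : ∀ s : ℕ, s ≤ K → ve (k := K+1) (Fin.cons x t) (s+1) = ve t s :=
        fun s hs => ve_cons_succ x t hs
      have hrhs : ∀ m : Fin n, (if ve t 0 = m then (1:ℝ) else 0) *
            (A a m * c m *
              (if ve t 0 = m ∧ ve t K = j then
                (∏ s ∈ range K, A (ve t s) (ve t (s+1))) *
                ((if K = 0 then 1 else (if ve t 1 = a then θ else 1)) *
                 ∏ s ∈ range (K-1), if ve t s = ve t (s+2) then θ else 1)
               else 0))
          = (if ve t 0 = m then
              (A a m * c m *
              (if ve t K = j then
                (∏ s ∈ range K, A (ve t s) (ve t (s+1))) *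
                ((if K = 0 then 1 else (if ve t 1 = a then θ else 1)) *
                 ∏ s ∈ range (K-1), if ve t s = ve t (s+2) then θ else 1)
               else 0)) else 0) := by
        intro m
        by_cases hm : ve t 0 = m
        · simp [hm]
        · simp [hm]
      rw [Finset.sum_congr rfl fun m _ => hrhs m, Finset.sum_ite_eq]
      simp only [Finset.mem_univ, ite_true]
      have hstep : (∏ s ∈ range (K+1),
            A (ve (k := K+1) (Fin.cons x t) s) (ve (k := K+1) (Fin.cons x t) (s+1)))
          = A x (ve t 0) * ∏ s ∈ range K, A (ve t s) (ve t (s+1)) := by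
        rw [Finset.prod_range_succ']
        rw [hv0, hvs 0 (Nat.zero_le _), mul_comm]
        congr 1
        refine Finset.prod_congr rfl fun s hs => ?_
        simp only [Finset.mem_range] at hs
        rw [hvs s (by omega), hvs (s+1) (by omega)]
      have hbt : (∏ s ∈ range (K+1-1),
            if ve (k := K+1) (Fin.cons x t) s = ve (k := K+1) (Fin.cons x t) (s+2) then θ else 1)
          = (if K = 0 then 1 else if ve t 1 = x then θ else 1) *
            ∏ s ∈ range (K-1), if ve t s = ve t (s+2) then θ else 1 := by
        match K with
        | 0 => simp
        | (M+1) =>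
          simp only [Nat.add_sub_cancel]
          rw [if_neg (Nat.succ_ne_zero M), Finset.prod_range_succ']
          rw [mul_comm]
          congr 1
          · rw [hv0, show (0:ℕ)+2 = 0+1+1 from rfl, hvs (0+1) (by omega)]
            by_cases h : ve t (0+1) = x
            · rw [if_pos h.symm, if_pos (show ve t 1 = x from h)]
            · rw [if_neg (fun hh => h hh.symm), if_neg (show ¬ ve t 1 = x from h)]
          · refine Finset.prod_congr rfl fun s hs => ?_
            simp only [Finset.mem_range] at hs
            rw [hvs s (by omega), show s + 1 + 2 = (s+2) + 1 from by ring, hvs (s+2) (by omega)]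
      have h1 : ve (k := K+1) (Fin.cons x t) 1 = ve t 0 := hvs 0 (Nat.zero_le _)
      rw [hstep, hbt, hv0, hvs K (le_refl K), h1,
        if_neg (Nat.succ_ne_zero K)]
      by_cases hx : x = a
      · subst hx
        by_cases hK : ve t K = j
        · rw [if_pos (⟨rfl, hK⟩ : x = x ∧ ve t K = j), if_pos rfl, if_pos hK]
          ring
        · rw [if_neg (fun hh => hK hh.2), if_neg hK]
          ring
      · rw [if_neg (fun hh => hx hh.1), if_neg hx]
        ring
    rw [Finset.sum_congr rfl fun x _ => Finset.sum_congr rfl fun t _ => key x t]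
    rw [Finset.sum_congr rfl fun x (_ : x ∈ univ) => (Finset.mul_sum _ _ _).symm]
    rw [Finset.sum_congr rfl fun x (_ : x ∈ univ) => boole_mul _ _]
    rw [Finset.sum_ite_eq', if_pos (Finset.mem_univ a)]
    rw [Finset.sum_comm]
    refine Finset.sum_congr rfl fun m _ => ?_
    have ih' : (∑ t : Fin (K+1) → Fin n,
        (if ve t 0 = m ∧ ve t K = j then
          (∏ s ∈ range K, A (ve t s) (ve t (s+1))) *
          ((if K = 0 then 1 else (if ve t 1 = a then θ else 1)) *
           ∏ s ∈ range (K-1), if ve t s = ve t (s+2) then θ else 1)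
         else 0))
        = wa A θ K (fun l => if l = a then θ else 1) m j :=
      ih (fun l => if l = a then θ else 1) m j
    rw [← ih', Finset.mul_sum]
    refine Finset.sum_congr rfl fun t _ => ?_
    by_cases hm : ve t 0 = m
    · rw [if_pos hm, one_mul]
    · rw [if_neg hm, zero_mul, if_neg (fun hh => hm hh.1), mul_zero]

/-! ### `btdwCount` in terms of `wa` -/

open scoped Classical in
lemma btdw_apply (A : Matrix (Fin n) (Fin n) ℝ) (θ : ℝ) (K : ℕ) (i j : Fin n) :
    btdwCount A θ K i j =
      ∑ w : Fin (K + 1) → Fin n,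
        (if ve w 0 = i ∧ ve w K = j ∧ (∀ s ∈ Finset.range K, A (ve w s) (ve w (s + 1)) = 1)
         then θ ^ ((Finset.range (K - 1)).filter fun s => ve w s = ve w (s + 2)).card
         else 0) := rfl

lemma btdw_wa (A : Matrix (Fin n) (Fin n) ℝ) (θ : ℝ)
    (hA01 : ∀ i j, A i j = 0 ∨ A i j = 1) (K : ℕ) (i j : Fin n) :
    btdwCount A θ K i j = wa A θ K (fun _ => 1) i j := by
  rw [← bridge A θ K (fun _ => (1:ℝ)) i j, btdw_apply]
  refine Finset.sum_congr rfl fun w _ => ?_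
  by_cases h3 : ∀ s ∈ Finset.range K, A (ve w s) (ve w (s + 1)) = 1
  · by_cases h12 : ve w 0 = i ∧ ve w K = j
    · rw [if_pos ⟨h12.1, h12.2, h3⟩, if_pos h12]
      rw [Finset.prod_eq_one h3, ite_self, one_mul, one_mul]
      rw [Finset.prod_ite, Finset.prod_const, Finset.prod_const, one_pow, mul_one]
    · rw [if_neg (fun hh => h12 ⟨hh.1, hh.2.1⟩), if_neg h12]
  · rw [if_neg (fun hh => h3 hh.2.2)]
    by_cases h12 : ve w 0 = i ∧ ve w K = j
    · rw [if_pos h12]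
      push_neg at h3
      obtain ⟨s, hs, hne⟩ := h3
      rw [Finset.prod_eq_zero hs ((hA01 _ _).resolve_right hne), zero_mul]
    · rw [if_neg h12]

/-! ### the three-term recurrence for `wa` -/

lemma wa_congr (A : Matrix (Fin n) (Fin n) ℝ) (θ : ℝ) (k : ℕ) (c c' : Fin n → ℝ) (a j : Fin n)
    (h : ∀ l, A a l ≠ 0 → c l = c' l) : wa A θ k c a j = wa A θ k c' a j := by
  cases k with
  | zero => rfl
  | succ k =>
    show (∑ m, A a m * c m * wa A θ k _ m j) = ∑ m, A a m * c' m * wa A θ k _ m j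
    refine Finset.sum_congr rfl fun m _ => ?_
    by_cases hm : A a m = 0
    · rw [hm]; ring
    · rw [h m hm]

lemma wa_drop (A : Matrix (Fin n) (Fin n) ℝ) (θ : ℝ) (k : ℕ) (a m j : Fin n)
    (h : A m a = 0) :
    wa A θ k (fun l => if l = a then θ else 1) m j = wa A θ k (fun _ => 1) m j := by
  refine wa_congr A θ k _ _ m j fun l hl => ?_
  by_cases hla : l = a
  · exact absurd (hla ▸ h) hl
  · rw [if_neg hla]

lemma wa_rec (A : Matrix (Fin n) (Fin n) ℝ) (θ : ℝ)
    (hA01 : ∀ i j, A i j = 0 ∨ A i j = 1) (k : ℕ) (i j : Fin n) :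
    wa A θ (k+3) (fun _ => 1) i j
      = (∑ m, A i m * wa A θ (k+2) (fun _ => 1) m j)
        + ((1-θ) * ((1-θ) * wa A θ (k+1) (fun _ => 1) i j)
             - (1-θ) * ((∑ m, A i m * A m i) * wa A θ (k+1) (fun _ => 1) i j))
        - (1-θ)^2 * ∑ m, (A i m - A i m * A m i) * wa A θ k (fun _ => 1) m j := by
  have F1 : ∀ m, wa A θ (k+2) (fun l => if l = i then θ else 1) m j
      = wa A θ (k+2) (fun _ => 1) m j
        - (1-θ) * (A m i * wa A θ (k+1) (fun l' => if l' = m then θ else 1) i j) := by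
    intro m
    have E1 : wa A θ (k+2) (fun l => if l = i then θ else 1) m j
        = ∑ l, A m l * (if l = i then θ else 1) *
            wa A θ (k+1) (fun l' => if l' = m then θ else 1) l j := rfl
    have E2 : wa A θ (k+2) (fun _ : Fin n => (1:ℝ)) m j
        = ∑ l, A m l * 1 * wa A θ (k+1) (fun l' => if l' = m then θ else 1) l j := rfl
    rw [E1, E2]
    rw [show (1-θ) * (A m i * wa A θ (k+1) (fun l' => if l' = m then θ else 1) i j)
        = ∑ l, if l = i then
            (1-θ) * (A m l * wa A θ (k+1) (fun l' => if l' = m then θ else 1) l j) else 0 from by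
      rw [Finset.sum_ite_eq' univ i, if_pos (Finset.mem_univ i)]]
    rw [← Finset.sum_sub_distrib]
    refine Finset.sum_congr rfl fun l _ => ?_
    by_cases hl : l = i
    · rw [if_pos hl, if_pos hl]; ring
    · rw [if_neg hl, if_neg hl]; ring
  have F2 : ∀ m, wa A θ (k+1) (fun l' => if l' = m then θ else 1) i j
      = wa A θ (k+1) (fun _ => 1) i j
        - (1-θ) * (A i m * wa A θ k (fun l' => if l' = i then θ else 1) m j) := by
    intro m
    have E1 : wa A θ (k+1) (fun l' => if l' = m then θ else 1) i j
        = ∑ l, A i l * (if l = m then θ else 1) *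
            wa A θ k (fun l' => if l' = i then θ else 1) l j := rfl
    have E2 : wa A θ (k+1) (fun _ : Fin n => (1:ℝ)) i j
        = ∑ l, A i l * 1 * wa A θ k (fun l' => if l' = i then θ else 1) l j := rfl
    rw [E1, E2]
    rw [show (1-θ) * (A i m * wa A θ k (fun l' => if l' = i then θ else 1) m j)
        = ∑ l, if l = m then
            (1-θ) * (A i l * wa A θ k (fun l' => if l' = i then θ else 1) l j) else 0 from by
      rw [Finset.sum_ite_eq' univ m, if_pos (Finset.mem_univ m)]]
    rw [← Finset.sum_sub_distrib]
    refine Finset.sum_congr rfl fun l _ => ?_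
    by_cases hl : l = m
    · rw [if_pos hl, if_pos hl]; ring
    · rw [if_neg hl, if_neg hl]; ring
  have F4 : ∀ m, (A i m - A i m * A m i) * wa A θ k (fun l' => if l' = i then θ else 1) m j
      = (A i m - A i m * A m i) * wa A θ k (fun _ => 1) m j := by
    intro m
    rcases hA01 m i with h | h
    · rw [wa_drop A θ k i m j h]
    · rw [h, mul_one, sub_self, zero_mul, zero_mul]
  have E0 : wa A θ (k+3) (fun _ : Fin n => (1:ℝ)) i j
      = ∑ m, A i m * 1 * wa A θ (k+2) (fun l => if l = i then θ else 1) m j := rfl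
  have G1 : wa A θ (k+3) (fun _ : Fin n => (1:ℝ)) i j
      = (∑ m, A i m * wa A θ (k+2) (fun _ => 1) m j)
        - (1-θ) * ∑ m, A i m * A m i *
            wa A θ (k+1) (fun l' => if l' = m then θ else 1) i j := by
    rw [E0, Finset.mul_sum, ← Finset.sum_sub_distrib]
    refine Finset.sum_congr rfl fun m _ => ?_
    rw [F1 m]; ring
  have G2 : (∑ m, A i m * A m i * wa A θ (k+1) (fun l' => if l' = m then θ else 1) i j)
      = (∑ m, A i m * A m i) * wa A θ (k+1) (fun _ => 1) i j
        - (1-θ) * ∑ m, A i m * A m i * wa A θ k (fun l' => if l' = i then θ else 1) m j := by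
    rw [Finset.sum_mul, Finset.mul_sum, ← Finset.sum_sub_distrib]
    refine Finset.sum_congr rfl fun m _ => ?_
    rw [F2 m]
    rcases hA01 i m with h | h
    · rw [h]; ring
    · rw [h]; ring
  have G3 : (∑ m, A i m * A m i * wa A θ k (fun l' => if l' = i then θ else 1) m j)
      = wa A θ (k+1) (fun _ => 1) i j
        - ∑ m, (A i m - A i m * A m i) * wa A θ k (fun _ => 1) m j := by
    have E3 : wa A θ (k+1) (fun _ : Fin n => (1:ℝ)) i j
        = ∑ m, A i m * 1 * wa A θ k (fun l' => if l' = i then θ else 1) m j := rfl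
    rw [E3, ← Finset.sum_sub_distrib]
    refine Finset.sum_congr rfl fun m _ => ?_
    rw [← F4 m]; ring
  rw [G1, G2, G3]; ring

/-! ### the matrix sequences -/

noncomputable def Z31 (A : Matrix (Fin n) (Fin n) ℝ) (θ : ℝ) : Matrix (Fin n) (Fin n) ℝ :=
  -((1 - θ) ^ 2) • (A - recipMat A)

noncomputable def Z32 (A : Matrix (Fin n) (Fin n) ℝ) (θ : ℝ) : Matrix (Fin n) (Fin n) ℝ :=
  (1 - θ) • ((1 - θ) • 1 - degDiag A)

lemma Zmul_stack (A : Matrix (Fin n) (Fin n) ℝ) (θ : ℝ) (X Y W : Matrix (Fin n) (Fin n) ℝ) :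
    Zmat A θ * stack3 X Y W = stack3 Y W (Z31 A θ * X + Z32 A θ * Y + A * W) := by
  ext i j
  rcases i with (i | i) | i <;>
    simp [Zmat, stack3, Z31, Z32, Matrix.mul_apply, Fintype.sum_sum_type,
      Matrix.one_apply, Finset.sum_ite_eq, Matrix.add_apply, Finset.mul_sum,
      neg_mul, Finset.sum_neg_distrib, mul_assoc]

noncomputable def Rseq (A : Matrix (Fin n) (Fin n) ℝ) (θ : ℝ) : ℕ → Matrix (Fin n) (Fin n) ℝ
  | 0 => 1
  | 1 => A
  | 2 => A * A + Z32 A θ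
  | (k+3) => A * Rseq A θ (k+2) + Z32 A θ * Rseq A θ (k+1) + Z31 A θ * Rseq A θ k

lemma pow_stack (A : Matrix (Fin n) (Fin n) ℝ) (θ : ℝ) : ∀ k : ℕ,
    Zmat A θ ^ (k+2) * stack3 (0 : Matrix (Fin n) (Fin n) ℝ) 0 1
      = stack3 (Rseq A θ k) (Rseq A θ (k+1)) (Rseq A θ (k+2))
  | 0 => by
    have h1 : Zmat A θ * stack3 (0 : Matrix (Fin n) (Fin n) ℝ) 0 1 = stack3 0 1 A := by
      rw [Zmul_stack]; simp
    have h2 : Zmat A θ ^ 2 * stack3 (0 : Matrix (Fin n) (Fin n) ℝ) 0 1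
        = Zmat A θ * (Zmat A θ * stack3 (0 : Matrix (Fin n) (Fin n) ℝ) 0 1) := by
      rw [sq, Matrix.mul_assoc]
    rw [h2, h1, Zmul_stack]
    simp [Rseq]
    rw [add_comm]
  | (k+1) => by
    have h2 : Zmat A θ ^ (k+3) * stack3 (0 : Matrix (Fin n) (Fin n) ℝ) 0 1
        = Zmat A θ * (Zmat A θ ^ (k+2) * stack3 (0 : Matrix (Fin n) (Fin n) ℝ) 0 1) := by
      rw [pow_succ', Matrix.mul_assoc]
    rw [h2, pow_stack A θ k, Zmul_stack]
    have h3 : Rseq A θ (k+3)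
        = A * Rseq A θ (k+2) + Z32 A θ * Rseq A θ (k+1) + Z31 A θ * Rseq A θ k := rfl
    rw [show k+1+2 = k+3 from rfl, show k+1+1 = k+2 from rfl, h3]
    abel

lemma pow_br (A : Matrix (Fin n) (Fin n) ℝ) (θ : ℝ) (k : ℕ) (i j : Fin n) :
    (Zmat A θ ^ k) (Sum.inr i) (Sum.inr j) = Rseq A θ k i j := by
  match k with
  | 0 => simp [Rseq, Matrix.one_apply, Sum.inr.injEq]
  | 1 => simp [Rseq, Zmat]
  | (k+2) =>
    have h : (Zmat A θ ^ (k+2)) (Sum.inr i) (Sum.inr j)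
        = (Zmat A θ ^ (k+2) * stack3 (0 : Matrix (Fin n) (Fin n) ℝ) 0 1) (Sum.inr i) j := by
      rw [Matrix.mul_apply, Fintype.sum_sum_type]
      simp [stack3, Matrix.one_apply, Finset.sum_ite_eq]
    rw [h, pow_stack A θ k]
    simp [stack3]

noncomputable def Qs (A : Matrix (Fin n) (Fin n) ℝ) (θ : ℝ) : ℕ → Matrix (Fin n) (Fin n) ℝ
  | 0 => 1
  | 1 => A
  | (k+2) => Rseq A θ (k+2) - ((1-θ)^2) • Rseq A θ k

lemma Qs_rec (A : Matrix (Fin n) (Fin n) ℝ) (θ : ℝ) (k : ℕ) :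
    Qs A θ (k+3) = A * Qs A θ (k+2) + Z32 A θ * Qs A θ (k+1) + Z31 A θ * Qs A θ k := by
  match k with
  | 0 =>
    show Rseq A θ 3 - (1-θ)^2 • Rseq A θ 1
        = A * (Rseq A θ 2 - (1-θ)^2 • Rseq A θ 0) + Z32 A θ * A + Z31 A θ * 1
    have e3 : Rseq A θ 3 = A * Rseq A θ 2 + Z32 A θ * Rseq A θ 1 + Z31 A θ * Rseq A θ 0 := rfl
    rw [e3, show Rseq A θ 1 = A from rfl, show Rseq A θ 0 = 1 from rfl,
      Matrix.mul_one, mul_sub, Matrix.mul_smul, Matrix.mul_one]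
    abel
  | 1 =>
    show Rseq A θ 4 - (1-θ)^2 • Rseq A θ 2
        = A * (Rseq A θ 3 - (1-θ)^2 • Rseq A θ 1)
          + Z32 A θ * (Rseq A θ 2 - (1-θ)^2 • Rseq A θ 0) + Z31 A θ * A
    have e4 : Rseq A θ 4 = A * Rseq A θ 3 + Z32 A θ * Rseq A θ 2 + Z31 A θ * Rseq A θ 1 := rfl
    have eR2 : Rseq A θ 2 = A * Rseq A θ 1 + Z32 A θ * Rseq A θ 0 := by
      show A * A + Z32 A θ = _
      rw [show Rseq A θ 1 = A from rfl, show Rseq A θ 0 = 1 from rfl, Matrix.mul_one]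
    calc Rseq A θ 4 - (1-θ)^2 • Rseq A θ 2
        = A * Rseq A θ 3 + Z32 A θ * Rseq A θ 2 + Z31 A θ * Rseq A θ 1
            - (1-θ)^2 • (A * Rseq A θ 1 + Z32 A θ * Rseq A θ 0) := by
          rw [← eR2, ← e4]
      _ = A * (Rseq A θ 3 - (1-θ)^2 • Rseq A θ 1)
            + Z32 A θ * (Rseq A θ 2 - (1-θ)^2 • Rseq A θ 0) + Z31 A θ * Rseq A θ 1 := by
          rw [mul_sub, mul_sub, Matrix.mul_smul, Matrix.mul_smul, smul_add]
          abel
      _ = _ := by rw [show Rseq A θ 1 = A from rfl]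
  | (k+2) =>
    show Rseq A θ (k+5) - (1-θ)^2 • Rseq A θ (k+3)
        = A * (Rseq A θ (k+4) - (1-θ)^2 • Rseq A θ (k+2))
          + Z32 A θ * (Rseq A θ (k+3) - (1-θ)^2 • Rseq A θ (k+1))
          + Z31 A θ * (Rseq A θ (k+2) - (1-θ)^2 • Rseq A θ k)
    have e5 : Rseq A θ (k+5)
        = A * Rseq A θ (k+4) + Z32 A θ * Rseq A θ (k+3) + Z31 A θ * Rseq A θ (k+2) := rfl
    have e3 : Rseq A θ (k+3)
        = A * Rseq A θ (k+2) + Z32 A θ * Rseq A θ (k+1) + Z31 A θ * Rseq A θ k := rfl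
    rw [e5]
    nth_rewrite 2 [e3]
    rw [smul_add, smul_add, mul_sub, mul_sub, mul_sub, Matrix.mul_smul, Matrix.mul_smul,
      Matrix.mul_smul]
    abel

/-! ### `btdwCount` equals `Qs` -/

lemma btdw_rec (A : Matrix (Fin n) (Fin n) ℝ) (θ : ℝ)
    (hA01 : ∀ i j, A i j = 0 ∨ A i j = 1) (k : ℕ) :
    btdwCount A θ (k+3) = A * btdwCount A θ (k+2) + Z32 A θ * btdwCount A θ (k+1)
      + Z31 A θ * btdwCount A θ k := by
  ext i j
  rw [Matrix.add_apply, Matrix.add_apply, Matrix.mul_apply, Matrix.mul_apply, Matrix.mul_apply]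
  have hz1 : (∑ m, A i m * btdwCount A θ (k+2) m j)
      = ∑ m, A i m * wa A θ (k+2) (fun _ => 1) m j :=
    Finset.sum_congr rfl fun m _ => by rw [btdw_wa A θ hA01]
  have hz32 : (∑ m, Z32 A θ i m * btdwCount A θ (k+1) m j)
      = (1-θ) * ((1-θ) * wa A θ (k+1) (fun _ => 1) i j)
        - (1-θ) * ((∑ m, A i m * A m i) * wa A θ (k+1) (fun _ => 1) i j) := by
    have hzv : ∀ m, Z32 A θ i m
        = (1-θ) * ((1-θ) * (if i = m then 1 else 0)
            - (if i = m then ∑ l, A i l * A l i else 0)) := by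
      intro m
      simp [Z32, Matrix.smul_apply, Matrix.sub_apply, Matrix.one_apply, degDiag,
        Matrix.diagonal_apply, Matrix.mul_apply, smul_eq_mul]
    calc (∑ m, Z32 A θ i m * btdwCount A θ (k+1) m j)
        = ∑ m, (if i = m then ((1-θ) * ((1-θ) - ∑ l, A i l * A l i))
            * wa A θ (k+1) (fun _ => 1) m j else 0) := by
          refine Finset.sum_congr rfl fun m _ => ?_
          rw [btdw_wa A θ hA01, hzv m]
          by_cases him : i = m
          · rw [if_pos him, if_pos him, if_pos him]; ring
          · rw [if_neg him, if_neg him, if_neg him]; ring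
      _ = ((1-θ) * ((1-θ) - ∑ l, A i l * A l i)) * wa A θ (k+1) (fun _ => 1) i j := by
          rw [Finset.sum_ite_eq, if_pos (Finset.mem_univ i)]
      _ = _ := by ring
  have hz31 : (∑ m, Z31 A θ i m * btdwCount A θ k m j)
      = -((1-θ)^2 * ∑ m, (A i m - A i m * A m i) * wa A θ k (fun _ => 1) m j) := by
    rw [Finset.mul_sum, ← Finset.sum_neg_distrib]
    refine Finset.sum_congr rfl fun m _ => ?_
    rw [btdw_wa A θ hA01]
    have : Z31 A θ i m = -((1-θ)^2) * (A i m - A i m * A m i) := by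
      simp [Z31, recipMat, Matrix.smul_apply, Matrix.sub_apply, Matrix.of_apply, smul_eq_mul]
    rw [this]; ring
  rw [hz1, hz32, hz31, btdw_wa A θ hA01, wa_rec A θ hA01 k i j]
  ring

lemma btdw_eq_Qs (A : Matrix (Fin n) (Fin n) ℝ) (θ : ℝ)
    (hA01 : ∀ i j, A i j = 0 ∨ A i j = 1) : ∀ K, btdwCount A θ K = Qs A θ K := by
  intro K
  induction K using Nat.strong_induction_on with
  | _ K ih =>
    match K, ih with
    | 0, _ =>
      ext i j
      rw [btdw_wa A θ hA01, wa_zero]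
      show _ = (1 : Matrix (Fin n) (Fin n) ℝ) i j
      rw [Matrix.one_apply]
    | 1, _ =>
      ext i j
      rw [btdw_wa A θ hA01]
      have e : wa A θ 1 (fun _ : Fin n => (1:ℝ)) i j
          = ∑ m, A i m * 1 * (if m = j then 1 else 0) := rfl
      rw [e]
      show _ = A i j
      rw [show A i j = ∑ m, if m = j then A i m * 1 else 0 from by
        rw [Finset.sum_ite_eq' univ j, if_pos (Finset.mem_univ j), mul_one]]
      refine Finset.sum_congr rfl fun m _ => ?_
      by_cases hm : m = j
      · rw [if_pos hm, if_pos hm, mul_one]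
      · rw [if_neg hm, if_neg hm, mul_zero]
    | 2, _ =>
      ext i j
      rw [btdw_wa A θ hA01]
      have e2 : wa A θ 2 (fun _ : Fin n => (1:ℝ)) i j
          = ∑ m, A i m * 1 * wa A θ 1 (fun l => if l = i then θ else 1) m j := rfl
      have e3 : ∀ m, wa A θ 1 (fun l => if l = i then θ else 1) m j
          = A m j * (if j = i then θ else 1) := by
        intro m
        have e1 : wa A θ 1 (fun l => if l = i then θ else 1) m j
            = ∑ l, A m l * (if l = i then θ else 1) * (if l = j then 1 else 0) := rfl
        rw [e1]
        rw [show A m j * (if j = i then θ else 1)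
            = ∑ l, if l = j then A m l * (if l = i then θ else 1) else 0 from by
          rw [Finset.sum_ite_eq' univ j, if_pos (Finset.mem_univ j)]]
        refine Finset.sum_congr rfl fun l _ => ?_
        by_cases hl : l = j
        · subst hl; rw [if_pos rfl, if_pos rfl, mul_one]
        · rw [if_neg hl, if_neg hl, mul_zero]
      rw [e2, Finset.sum_congr rfl fun m _ => by rw [e3 m]]
      show _ = (Rseq A θ 2 - (1-θ)^2 • Rseq A θ 0) i j
      rw [show Rseq A θ 2 = A * A + Z32 A θ from rfl, show Rseq A θ 0 = 1 from rfl]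
      rw [Matrix.sub_apply, Matrix.add_apply, Matrix.smul_apply,
        Matrix.mul_apply, Matrix.one_apply]
      have hZ : Z32 A θ i j
          = (1-θ) * ((1-θ) * (if i = j then 1 else 0)
              - (if i = j then ∑ l, A i l * A l i else 0)) := by
        simp [Z32, Matrix.smul_apply, Matrix.sub_apply, Matrix.one_apply, degDiag,
          Matrix.diagonal_apply, Matrix.mul_apply, smul_eq_mul]
      rw [hZ]
      by_cases h : i = j
      · subst h
        simp only [eq_self_iff_true, if_true]
        rw [Finset.sum_congr rfl fun m _ => show A i m * 1 * (A m i * θ)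
            = (A i m * A m i) * θ from by ring, ← Finset.sum_mul]
        simp only [smul_eq_mul]
        ring
      · simp only [if_neg h, if_neg (fun hh : j = i => h hh.symm)]
        simp only [smul_eq_mul]
        rw [Finset.sum_congr rfl fun m _ => show A i m * 1 * (A m j * 1)
            = A i m * A m j from by ring]
        ring
    | (k+3), ih =>
      have h0 := ih k (by omega)
      have h1 := ih (k+1) (by omega)
      have h2 := ih (k+2) (by omega)
      rw [btdw_rec A θ hA01 k, h0, h1, h2, ← Qs_rec]

end BTDWProof

open BTDWProof in
/-- Theorem 7.1, second part: if `f_0(Z) = Σ c_k Z^k` and `f_2(Z) = Σ c_{k+2} Z^k`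
converge, then `Σ c_k q_k(A)` converges and equals the `(3,3)` (bottom-right) `n × n`
block of `f_0(Z) − μ² f_2(Z)`. -/
theorem btdw_general_generating_function_block {n : ℕ} (hn : 1 ≤ n)
    (A : Matrix (Fin n) (Fin n) ℝ)
    (hA01 : ∀ i j, A i j = 0 ∨ A i j = 1) (hAdiag : ∀ i, A i i = 0)
    (θ : ℝ) (hθ0 : 0 ≤ θ) (hθ1 : θ ≤ 1) (μ : ℝ) (hμ : μ = 1 - θ)
    (c : ℕ → ℝ)
    (hc0 : Summable fun k : ℕ => c k • Zmat A θ ^ k)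
    (hc2 : Summable fun k : ℕ => c (k + 2) • Zmat A θ ^ k) :
    (Summable fun k : ℕ => c k • btdwCount A θ k) ∧
    (∑' k : ℕ, c k • btdwCount A θ k) =
      Matrix.of fun i j =>
        ((∑' k : ℕ, c k • Zmat A θ ^ k) - μ ^ 2 • ∑' k : ℕ, c (k + 2) • Zmat A θ ^ k)
          (Sum.inr i) (Sum.inr j) := by
  subst hμ
  have hQ : ∀ K, btdwCount A θ K = Qs A θ K := btdw_eq_Qs A θ hA01
  have h0e : ∀ i j : Fin n, HasSum (fun k => c k * Rseq A θ k i j)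
      ((∑' k : ℕ, c k • Zmat A θ ^ k) (Sum.inr i) (Sum.inr j)) := by
    intro i j
    have h := Pi.hasSum.1 (Pi.hasSum.1 hc0.hasSum (Sum.inr i)) (Sum.inr j)
    simpa only [Matrix.smul_apply, smul_eq_mul, pow_br] using h
  have h2e : ∀ i j : Fin n, HasSum (fun k => c (k+2) * Rseq A θ k i j)
      ((∑' k : ℕ, c (k + 2) • Zmat A θ ^ k) (Sum.inr i) (Sum.inr j)) := by
    intro i j
    have h := Pi.hasSum.1 (Pi.hasSum.1 hc2.hasSum (Sum.inr i)) (Sum.inr j)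
    simpa only [Matrix.smul_apply, smul_eq_mul, pow_br] using h
  have key : ∀ i j : Fin n, HasSum (fun k => (c k • btdwCount A θ k) i j)
      (((∑' k : ℕ, c k • Zmat A θ ^ k)
        - (1-θ) ^ 2 • ∑' k : ℕ, c (k + 2) • Zmat A θ ^ k) (Sum.inr i) (Sum.inr j)) := by
    intro i j
    set S0 : ℝ := (∑' k : ℕ, c k • Zmat A θ ^ k) (Sum.inr i) (Sum.inr j) with hS0
    set S2 : ℝ := (∑' k : ℕ, c (k + 2) • Zmat A θ ^ k) (Sum.inr i) (Sum.inr j) with hS2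
    have hshift : HasSum (fun k => c (k+2) * Rseq A θ (k+2) i j)
        (S0 - (c 0 * Rseq A θ 0 i j + c 1 * Rseq A θ 1 i j)) := by
      apply (hasSum_nat_add_iff (f := fun m => c m * Rseq A θ m i j) 2).2
      have : S0 - (c 0 * Rseq A θ 0 i j + c 1 * Rseq A θ 1 i j)
          + ∑ m ∈ Finset.range 2, c m * Rseq A θ m i j = S0 := by
        simp [Finset.sum_range_succ]
      rw [this]
      exact h0e i j
    have hg : HasSum (fun k => c (k+2) * Rseq A θ (k+2) i j
          - (1-θ)^2 * (c (k+2) * Rseq A θ k i j))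
        (S0 - (c 0 * Rseq A θ 0 i j + c 1 * Rseq A θ 1 i j) - (1-θ)^2 * S2) :=
      hshift.sub ((h2e i j).mul_left ((1-θ)^2))
    have hfg : (fun k => (c (k+2) • btdwCount A θ (k+2)) i j)
        = fun k => c (k+2) * Rseq A θ (k+2) i j - (1-θ)^2 * (c (k+2) * Rseq A θ k i j) := by
      funext k
      rw [Matrix.smul_apply, hQ (k+2),
        show Qs A θ (k+2) = Rseq A θ (k+2) - ((1-θ)^2) • Rseq A θ k from rfl,
        Matrix.sub_apply, Matrix.smul_apply]
      simp only [smul_eq_mul]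
      ring
    have hg' : HasSum (fun k => (c (k+2) • btdwCount A θ (k+2)) i j)
        (S0 - (c 0 * Rseq A θ 0 i j + c 1 * Rseq A θ 1 i j) - (1-θ)^2 * S2) := by
      rw [hfg]; exact hg
    have hf := (hasSum_nat_add_iff (f := fun m => (c m • btdwCount A θ m) i j) 2).1 hg'
    have hF0 : (c 0 • btdwCount A θ 0) i j = c 0 * Rseq A θ 0 i j := by
      rw [Matrix.smul_apply, hQ 0]; rfl
    have hF1 : (c 1 • btdwCount A θ 1) i j = c 1 * Rseq A θ 1 i j := by
      rw [Matrix.smul_apply, hQ 1]; rfl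
    have hval : S0 - (c 0 * Rseq A θ 0 i j + c 1 * Rseq A θ 1 i j) - (1-θ)^2 * S2
        + ∑ m ∈ Finset.range 2, (c m • btdwCount A θ m) i j
        = ((∑' k : ℕ, c k • Zmat A θ ^ k)
          - (1-θ) ^ 2 • ∑' k : ℕ, c (k + 2) • Zmat A θ ^ k) (Sum.inr i) (Sum.inr j) := by
      rw [Matrix.sub_apply, Matrix.smul_apply]
      simp only [Finset.sum_range_succ, Finset.sum_range_zero, zero_add, hF0, hF1,
        smul_eq_mul, ← hS0, ← hS2]
      ring
    rw [← hval]
    exact hf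
  have hM : HasSum (fun k : ℕ => c k • btdwCount A θ k)
      (Matrix.of fun i j =>
        ((∑' k : ℕ, c k • Zmat A θ ^ k)
          - (1-θ) ^ 2 • ∑' k : ℕ, c (k + 2) • Zmat A θ ^ k) (Sum.inr i) (Sum.inr j)) :=
    Pi.hasSum.2 fun i => Pi.hasSum.2 fun j => key i j
  exact ⟨hM.summable, hM.tsum_eq⟩
end

section
/- Let A be the adjacency matrix of an undirected d-regular graph (so A is symmetric, every row of A sums to d ≥ 1, D = dI and S = A), let θ ∈ [0,1] with d − 1 + θ > 0, and set μ = 1 − θ. Then at α = 1/(d − 1 + θ) the coefficient matrix M(α) = I − αA − μα²(μI − D) + μ²α³(A − S) of the backtrack-downweighted Katz system is singular; indeed M(α)·𝟏 = 0 at this value of α. -/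
open Matrix Finset

/-- On an undirected `d`-regular graph with `d − 1 + θ > 0`, the coefficient matrix of
the backtrack-downweighted Katz system becomes singular at `α = 1/(d − 1 + θ)`;
indeed it maps the all-ones vector to zero. -/
theorem btdw_regular_singular {n : ℕ} (hn : 1 ≤ n) (A : Matrix (Fin n) (Fin n) ℝ)
    (hA01 : ∀ i j, A i j = 0 ∨ A i j = 1) (hAdiag : ∀ i, A i i = 0)
    (hsym : ∀ i j, A i j = A j i)
    (d : ℕ) (hd : 1 ≤ d) (hreg : A *ᵥ (fun _ => (1 : ℝ)) = fun _ => (d : ℝ))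
    (θ : ℝ) (hθ0 : 0 ≤ θ) (hθ1 : θ ≤ 1) (hpos : 0 < (d : ℝ) - 1 + θ)
    (μ : ℝ) (hμ : μ = 1 - θ)
    (α : ℝ) (hα : α = 1 / ((d : ℝ) - 1 + θ)) :
    (1 - α • A - (μ * α ^ 2) • (μ • 1 - degDiag A) +
        (μ ^ 2 * α ^ 3) • (A - recipMat A)) *ᵥ (fun _ => (1 : ℝ)) = 0 ∧
    ¬ IsUnit (1 - α • A - (μ * α ^ 2) • (μ • 1 - degDiag A) +
        (μ ^ 2 * α ^ 3) • (A - recipMat A)) := by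
  have hS : recipMat A = A := by
    ext i j
    simp only [recipMat, Matrix.of_apply]
    rcases hA01 i j with h | h <;> rw [← hsym i j, h] <;> ring
  have hDone : ∀ i, degDiag A i i = (d : ℝ) := by
    intro i
    have : (A *ᵥ (fun _ => (1 : ℝ))) i = (d : ℝ) := by rw [hreg]
    simp only [Matrix.mulVec, dotProduct, mul_one] at this
    simp only [degDiag, Matrix.diagonal_apply_eq, Matrix.mul_apply]
    rw [← this]
    congr 1; ext j; rw [← hsym i j]; rcases hA01 i j with h | h <;> rw [h] <;> ring
  have hD : degDiag A = (d : ℝ) • (1 : Matrix (Fin n) (Fin n) ℝ) := by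
    ext i j
    by_cases h : i = j
    · subst h; simp [hDone i]
    · simp [degDiag, Matrix.diagonal_apply_ne _ h, Matrix.one_apply_ne h]
  have hM : (1 - α • A - (μ * α ^ 2) • (μ • 1 - degDiag A) +
        (μ ^ 2 * α ^ 3) • (A - recipMat A))
      = (1 - μ * α ^ 2 * (μ - d)) • (1 : Matrix (Fin n) (Fin n) ℝ) - α • A := by
    rw [hS, hD]
    simp only [sub_self, smul_zero, add_zero, smul_sub, smul_smul, sub_smul, one_smul, mul_sub]
    abel
  have hc : ((d : ℝ) - 1 + θ) ≠ 0 := ne_of_gt hpos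
  have hscal : 1 - μ * α ^ 2 * (μ - d) - α * d = 0 := by
    subst hμ hα; field_simp; ring
  have key : (1 - α • A - (μ * α ^ 2) • (μ • 1 - degDiag A) +
        (μ ^ 2 * α ^ 3) • (A - recipMat A)) *ᵥ (fun _ => (1 : ℝ)) = 0 := by
    rw [hM, Matrix.sub_mulVec, Matrix.smul_mulVec, Matrix.smul_mulVec,
      Matrix.one_mulVec, hreg]
    funext i
    simp only [Pi.sub_apply, Pi.smul_apply, smul_eq_mul, mul_one, Pi.zero_apply]
    linarith [hscal]
  refine ⟨key, fun hu => ?_⟩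
  have hinj := (Matrix.mulVec_injective_iff_isUnit.mpr hu)
  have h0 : (fun _ => (1 : ℝ)) = (0 : Fin n → ℝ) := by
    apply hinj
    rw [key, Matrix.mulVec_zero]
  have := congrFun h0 ⟨0, hn⟩
  simp at this
end
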